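/- Let n be a positive integer divisible by 8 and let C_1, C_2 be binary codes of length n with C_1 ⊆ C_2 ⊆ C_1^⊥. If C_1 is doubly even, 𝟏 ∈ C_1, dim C_1 = k_1, and dim C_2 = k_1 + k_2, then the number of quaternary even codes C of length n containing an element of {±1}^n (i.e., a codeword all of whose coordinates are 1 or 3 in Z_4) such that π(C) = C_1 and ι^{-1}(C) = C_2 is 2^{(n−k_1−k_2) + (k_1−1)(2n−3k_1−2−2k_2)/2}. -/

import Mathlib

open scoped BigOperators

set_option maxHeartbeats 1000000

namespace Paper

/-- Self-orthogonality of a set of vectors w.r.t. the standard inner product. -/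
def sorth {m : ℕ} {ι : Type} [Fintype ι] (S : Set (ι → ZMod m)) : Prop :=
  ∀ x ∈ S, ∀ y ∈ S, ∑ i, x i * y i = 0

/-- The dual (as a set) of a set of vectors w.r.t. the standard inner product. -/
def dualSet {m : ℕ} {ι : Type} [Fintype ι] (S : Set (ι → ZMod m)) : Set (ι → ZMod m) :=
  {x | ∀ y ∈ S, ∑ i, x i * y i = 0}

/-- A set of vectors is doubly even if every element has Hamming weight divisible by 4. -/
def doublyEven {m : ℕ} {ι : Type} [Fintype ι] (S : Set (ι → ZMod m)) : Prop :=
  ∀ x ∈ S, 4 ∣ (Finset.univ.filter fun i => x i ≠ 0).card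

/-- Coordinatewise reduction map `(Z_{p^2})^ι → (Z_p)^ι`. -/
def res (p : ℕ) [Fact p.Prime] {ι : Type} (v : ι → ZMod (p ^ 2)) : ι → ZMod p :=
  fun i => ZMod.castHom (dvd_pow_self p (by norm_num)) (ZMod p) (v i)

/-- The injection `(Z_p)^ι → (Z_{p^2})^ι` induced by `Z_p ≅ pZ_{p^2} ⊆ Z_{p^2}`. -/
def iot (p : ℕ) {ι : Type} (v : ι → ZMod p) : ι → ZMod (p ^ 2) :=
  fun i => (p : ZMod (p ^ 2)) * (ZMod.cast (v i))

/-- Coordinatewise reduction map `(Z_4)^ι → (Z_2)^ι`. -/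
def res4 {ι : Type} (v : ι → ZMod 4) : ι → ZMod 2 :=
  fun i => ZMod.castHom (by norm_num : (2:ℕ) ∣ 4) (ZMod 2) (v i)

/-- The injection `(Z_2)^ι → (Z_4)^ι`. -/
def iot4 {ι : Type} (v : ι → ZMod 2) : ι → ZMod 4 :=
  fun i => (2 : ZMod 4) * (ZMod.cast (v i))

/-- Euclidean weight on `Z_4`. -/
def ewt (x : ZMod 4) : ℕ := if x = 0 then 0 else if x = 2 then 4 else 1

/-- A quaternary code is even if every codeword has Euclidean weight divisible by 8. -/
def evenCode {ι : Type} [Fintype ι] (S : Set (ι → ZMod 4)) : Prop :=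
  ∀ x ∈ S, 8 ∣ ∑ i, ewt (x i)

/-- The code over `Z_q` generated by the rows of an integer matrix. -/
def intRowSpan (q : ℕ) {κ ι : Type} (G : Matrix κ ι ℤ) :
    Submodule (ZMod q) (ι → ZMod q) :=
  Submodule.span (ZMod q) (Set.range fun i => fun c => ((G i c : ℤ) : ZMod q))

/-- The Gaussian binomial coefficient `[n choose k]_p`. -/
def gauss (p n k : ℕ) : ℚ :=
  ∏ i ∈ Finset.range k, ((p : ℚ) ^ n - (p : ℚ) ^ i) / ((p : ℚ) ^ k - (p : ℚ) ^ i)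




section Aux
open Submodule

def r42 : ZMod 4 →+* ZMod 2 := ZMod.castHom (show (2:ℕ) ∣ 4 by norm_num) (ZMod 2)

instance : RingHomSurjective r42 := ⟨by decide⟩

lemma res4_apply {ι : Type} (v : ι → ZMod 4) (i : ι) : res4 v i = r42 (v i) := rfl

def res4L (n : ℕ) : (Fin n → ZMod 4) →ₛₗ[r42] (Fin n → ZMod 2) where
  toFun := res4
  map_add' x y := funext fun i => map_add r42 (x i) (y i)
  map_smul' a x := funext fun i => map_mul r42 a (x i)

def j24 : ZMod 2 →+ ZMod 4 := AddMonoidHom.mk' (fun c => 2 * ZMod.cast c) (by decide)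

def iot4A (n : ℕ) : (Fin n → ZMod 2) →+ (Fin n → ZMod 4) :=
  AddMonoidHom.mk' iot4 (fun x y => funext fun i => map_add j24 (x i) (y i))

lemma iot4A_apply {n : ℕ} (v : Fin n → ZMod 2) : iot4A n v = iot4 v := rfl

def lift0 {n : ℕ} (v : Fin n → ZMod 2) : Fin n → ZMod 4 := fun i => ZMod.cast (v i)

lemma res4_lift0 {n : ℕ} (v : Fin n → ZMod 2) : res4 (lift0 v) = v := by
  funext i
  show r42 (ZMod.cast (v i)) = v i
  revert v; exact fun v => (by decide : ∀ a : ZMod 2, r42 (ZMod.cast a : ZMod 4) = a) (v i)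

lemma res4_gv {n : ℕ} (c v : Fin n → ZMod 2) : res4 (lift0 c + iot4 v) = c := by
  funext i
  show r42 (ZMod.cast (c i) + 2 * ZMod.cast (v i)) = c i
  exact (by decide : ∀ a b : ZMod 2, r42 ((ZMod.cast a : ZMod 4) + 2 * ZMod.cast b) = a) (c i) (v i)

lemma res4_iot4 {n : ℕ} (v : Fin n → ZMod 2) : res4 (iot4 v) = 0 := by
  funext i
  show r42 (2 * ZMod.cast (v i)) = 0
  exact (by decide : ∀ b : ZMod 2, r42 ((2 : ZMod 4) * ZMod.cast b) = 0) (v i)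

lemma iot4_injective {n : ℕ} : Function.Injective (iot4 (ι := Fin n)) := by
  intro x y h
  funext i
  have h2 : ∀ a b : ZMod 2, (2:ZMod 4) * ZMod.cast a = 2 * ZMod.cast b → a = b := by decide
  exact h2 _ _ (congrFun h i)

/-- iot4 '' C as a Z4-submodule -/
def iotSub {n : ℕ} (C : Submodule (ZMod 2) (Fin n → ZMod 2)) :
    Submodule (ZMod 4) (Fin n → ZMod 4) where
  carrier := iot4 '' C
  add_mem' := by
    rintro _ _ ⟨x, hx, rfl⟩ ⟨y, hy, rfl⟩
    exact ⟨x + y, C.add_mem hx hy, map_add (iot4A n) x y⟩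
  zero_mem' := ⟨0, C.zero_mem, map_zero (iot4A n)⟩
  smul_mem' := by
    rintro a _ ⟨x, hx, rfl⟩
    refine ⟨r42 a • x, C.smul_mem _ hx, ?_⟩
    funext i
    show (2:ZMod 4) * ZMod.cast (r42 a * x i) = a * (2 * ZMod.cast (x i))
    exact (by decide : ∀ (a : ZMod 4) (c : ZMod 2),
      (2:ZMod 4) * ZMod.cast (r42 a * c) = a * (2 * ZMod.cast c)) a (x i)

lemma mem_iotSub {n : ℕ} {C : Submodule (ZMod 2) (Fin n → ZMod 2)} {x : Fin n → ZMod 4} :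
    x ∈ iotSub C ↔ ∃ v ∈ C, iot4 v = x := Iff.rfl

end Aux

section Weight
open Submodule
variable {n : ℕ}

lemma ewt_add_zmod8 (a b : ZMod 4) :
    ((ewt (a+b) : ZMod 8)) = (ewt a : ZMod 8) + (ewt b : ZMod 8) + 2 * ((a.val * b.val : ℕ) : ZMod 8) := by
  revert a b; decide

lemma wte_add (x y : Fin n → ZMod 4) :
    ((∑ i, ewt ((x+y) i) : ℕ) : ZMod 8)
      = ((∑ i, ewt (x i) : ℕ) : ZMod 8) + ((∑ i, ewt (y i) : ℕ) : ZMod 8)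
        + 2 * ((∑ i, (x i).val * (y i).val : ℕ) : ZMod 8) := by
  push_cast
  rw [Finset.mul_sum, ← Finset.sum_add_distrib, ← Finset.sum_add_distrib]
  refine Finset.sum_congr rfl fun i _ => ?_
  have := ewt_add_zmod8 (x i) (y i)
  push_cast at this ⊢
  simpa using this

lemma natsum_dot (x y : Fin n → ZMod 4) :
    ((∑ i, (x i).val * (y i).val : ℕ) : ZMod 4) = ∑ i, x i * y i := by
  push_cast
  refine Finset.sum_congr rfl fun i _ => ?_
  rw [ZMod.natCast_val, ZMod.natCast_val, ZMod.cast_id, ZMod.cast_id]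

lemma two_mul_zmod8_eq_zero_iff (N : ℕ) : ((2 * N : ℕ) : ZMod 8) = 0 ↔ ((N : ℕ) : ZMod 4) = 0 := by
  rw [ZMod.natCast_eq_zero_iff, ZMod.natCast_eq_zero_iff]
  omega

lemma dvd8_iff (N : ℕ) : 8 ∣ N ↔ ((N : ℕ) : ZMod 8) = 0 := (ZMod.natCast_eq_zero_iff N 8).symm

/-- key addition lemma -/
lemma wte_add_dvd {x y : Fin n → ZMod 4} (hx : 8 ∣ ∑ i, ewt (x i)) (hy : 8 ∣ ∑ i, ewt (y i))
    (hxy : ∑ i, x i * y i = 0) : 8 ∣ ∑ i, ewt ((x+y) i) := by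
  rw [dvd8_iff] at hx hy ⊢
  rw [wte_add, hx, hy]
  have h2 : ((2 * (∑ i, (x i).val * (y i).val) : ℕ) : ZMod 8) = 0 := by
    rw [two_mul_zmod8_eq_zero_iff, natsum_dot, hxy]
  push_cast at h2 ⊢
  rw [h2]; ring

/-- orthogonality from evenness -/
lemma orth_of_wte {x y : Fin n → ZMod 4} (hx : 8 ∣ ∑ i, ewt (x i)) (hy : 8 ∣ ∑ i, ewt (y i))
    (hxy : 8 ∣ ∑ i, ewt ((x+y) i)) : ∑ i, x i * y i = 0 := by
  rw [dvd8_iff] at hx hy hxy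
  rw [wte_add, hx, hy] at hxy
  rw [← natsum_dot, ← two_mul_zmod8_eq_zero_iff]
  push_cast at hxy ⊢
  simpa using hxy

lemma wte_neg (x : Fin n → ZMod 4) : ∑ i, ewt ((-x) i) = ∑ i, ewt (x i) := by
  refine Finset.sum_congr rfl fun i _ => ?_
  show ewt (-(x i)) = ewt (x i)
  exact (by decide : ∀ a : ZMod 4, ewt (-a) = ewt a) (x i)

lemma wte_smul {x : Fin n → ZMod 4} (a : ZMod 4) (hx : 8 ∣ ∑ i, ewt (x i))
    (hxx : ∑ i, x i * x i = 0) : 8 ∣ ∑ i, ewt ((a • x) i) := by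
  have ha : a = 0 ∨ a = 1 ∨ a = 2 ∨ a = 3 := by revert a; decide
  rcases ha with rfl | rfl | rfl | rfl
  · simp [ewt]
  · simpa using hx
  · have : (2 : ZMod 4) • x = x + x := by funext i; show 2 * x i = x i + x i; ring
    rw [this]; exact wte_add_dvd hx hx hxx
  · have : (3 : ZMod 4) • x = -x := by
      funext i; exact (by decide : ∀ a : ZMod 4, (3:ZMod 4) * a = -a) (x i)
    rw [this, wte_neg]; exact hx

/-- characterization of evenness of a span -/
lemma evenCode_span_iff (S : Set (Fin n → ZMod 4)) :
    evenCode ((Submodule.span (ZMod 4) S : Submodule (ZMod 4) (Fin n → ZMod 4)) : Set (Fin n → ZMod 4)) ↔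
      (∀ x ∈ S, 8 ∣ ∑ i, ewt (x i)) ∧ (∀ x ∈ S, ∀ y ∈ S, ∑ i, x i * y i = 0) := by
  constructor
  · intro he
    have hS : ∀ x ∈ S, x ∈ Submodule.span (ZMod 4) S := fun x hx => Submodule.subset_span hx
    refine ⟨fun x hx => he x (hS x hx), fun x hx y hy => ?_⟩
    exact orth_of_wte (he x (hS x hx)) (he y (hS y hy))
      (he _ ((Submodule.span (ZMod 4) S).add_mem (hS x hx) (hS y hy)))
  · rintro ⟨h1, h2⟩ x hx
    -- strengthened induction
    have main : ∀ x, x ∈ Submodule.span (ZMod 4) S →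
        (8 ∣ ∑ i, ewt (x i)) ∧ ∀ y ∈ Submodule.span (ZMod 4) S, ∑ i, x i * y i = 0 := by
      intro x hx
      induction hx using Submodule.span_induction with
      | mem z hz =>
        constructor
        · exact h1 z hz
        · intro y hy
          -- y ↦ ∑ z i * y i is linear; kills S
          let dz : (Fin n → ZMod 4) →ₗ[ZMod 4] ZMod 4 :=
            { toFun := fun y => ∑ i, z i * y i
              map_add' := fun u v => by
                rw [← Finset.sum_add_distrib]
                exact Finset.sum_congr rfl fun i _ => by show z i * (u i + v i) = _; ring
              map_smul' := fun a u => by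
                show ∑ i, z i * (a * u i) = a * ∑ i, z i * u i
                rw [Finset.mul_sum]
                exact Finset.sum_congr rfl fun i _ => by ring }
          have hker : Submodule.span (ZMod 4) S ≤ LinearMap.ker dz := by
            rw [Submodule.span_le]
            intro w hw
            exact LinearMap.mem_ker.mpr (h2 z hz w hw)
          exact LinearMap.mem_ker.mp (hker hy)
      | zero => simp [ewt]
      | add u v hu hv ihu ihv =>
        refine ⟨wte_add_dvd ihu.1 ihv.1 (ihu.2 v hv), fun y hy => ?_⟩
        have : ∑ i, (u + v) i * y i = (∑ i, u i * y i) + ∑ i, v i * y i := by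
          rw [← Finset.sum_add_distrib]; exact Finset.sum_congr rfl fun i _ => by
            show (u i + v i) * y i = _; ring
        rw [this, ihu.2 y hy, ihv.2 y hy, add_zero]
      | smul a u hu ihu =>
        refine ⟨wte_smul a ihu.1 (ihu.2 u hu), fun y hy => ?_⟩
        have : ∑ i, (a • u) i * y i = a * ∑ i, u i * y i := by
          rw [Finset.mul_sum]; exact Finset.sum_congr rfl fun i _ => by
            show (a * u i) * y i = _; ring
        rw [this, ihu.2 y hy, mul_zero]
    exact (main x hx).1
end Weight

section Code
open Submodule
variable {n k1 : ℕ} (C2 : Submodule (ZMod 2) (Fin n → ZMod 2))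
  (g : Fin k1 → (Fin n → ZMod 2))

/-- the lifted generators -/
def gvec (g v : Fin k1 → (Fin n → ZMod 2)) : Fin k1 → (Fin n → ZMod 4) :=
  fun i => lift0 (g i) + iot4 (v i)

def codeOf (v : Fin k1 → (Fin n → ZMod 2)) : Submodule (ZMod 4) (Fin n → ZMod 4) :=
  Submodule.span (ZMod 4) (Set.range (gvec g v)) ⊔ iotSub C2

lemma mem_codeOf {v : Fin k1 → (Fin n → ZMod 2)} {x : Fin n → ZMod 4} :
    x ∈ codeOf C2 g v ↔ ∃ a : Fin k1 → ZMod 4, ∃ w ∈ C2,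
      x = (∑ i, a i • gvec g v i) + iot4 w := by
  rw [codeOf, Submodule.mem_sup]
  constructor
  · rintro ⟨y, hy, z, hz, rfl⟩
    obtain ⟨a, ha⟩ := (mem_span_range_iff_exists_fun (ZMod 4)).mp hy
    obtain ⟨w, hw, rfl⟩ := hz
    exact ⟨a, w, hw, by rw [ha]⟩
  · rintro ⟨a, w, hw, rfl⟩
    refine ⟨∑ i, a i • gvec g v i, ?_, iot4 w, ⟨w, hw, rfl⟩, rfl⟩
    exact Submodule.sum_mem _ fun i _ =>
      Submodule.smul_mem _ _ (Submodule.subset_span ⟨i, rfl⟩)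

lemma res4_gvec (v : Fin k1 → (Fin n → ZMod 2)) (i : Fin k1) :
    res4 (gvec g v i) = g i := res4_gv _ _

lemma map_res4L_codeOf (v : Fin k1 → (Fin n → ZMod 2)) :
    Submodule.map (res4L n) (codeOf C2 g v) = Submodule.span (ZMod 2) (Set.range g) := by
  rw [codeOf, Submodule.map_sup]
  have h1 : Submodule.map (res4L n) (Submodule.span (ZMod 4) (Set.range (gvec g v)))
      = Submodule.span (ZMod 2) (Set.range g) := by
    rw [Submodule.map_span]
    congr 1
    rw [← Set.range_comp]
    exact congrArg _ (funext fun i => res4_gvec g v i)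
  have h2 : Submodule.map (res4L n) (iotSub C2) = ⊥ := by
    rw [Submodule.eq_bot_iff]
    rintro _ ⟨_, ⟨w, hw, rfl⟩, rfl⟩
    exact res4_iot4 w
  rw [h1, h2, sup_bot_eq]

/-- membership → coefficients : residue computation -/
lemma res4_combo (v : Fin k1 → (Fin n → ZMod 2)) (a : Fin k1 → ZMod 4) (w : Fin n → ZMod 2) :
    res4 ((∑ i, a i • gvec g v i) + iot4 w) = ∑ i, r42 (a i) • g i := by
  show res4L n ((∑ i, a i • gvec g v i) + iot4 w) = _
  rw [map_add, map_sum]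
  have hz : res4L n (iot4 w) = 0 := res4_iot4 w
  rw [hz, add_zero]
  refine Finset.sum_congr rfl fun i _ => ?_
  rw [LinearMap.map_smulₛₗ]
  show r42 (a i) • res4 (gvec g v i) = _
  rw [res4_gvec]

/-- half map -/
def hf : ZMod 4 → ZMod 2 := fun a => if a = 2 then 1 else 0

lemma coord_smul2 (c a b : ZMod 2) :
    ((2:ZMod 4) * (ZMod.cast c : ZMod 4)) * ((ZMod.cast a : ZMod 4) + (2:ZMod 4) * (ZMod.cast b : ZMod 4))
      = (2:ZMod 4) * (ZMod.cast (c * a) : ZMod 4) := by revert c a b; decide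

/-- torsion of codeOf -/
lemma torsion_codeOf (hind : LinearIndependent (ZMod 2) g) (hgC2 : ∀ i, g i ∈ C2)
    (v : Fin k1 → (Fin n → ZMod 2)) :
    iot4 ⁻¹' ((codeOf C2 g v : Submodule (ZMod 4) (Fin n → ZMod 4)) : Set (Fin n → ZMod 4))
      = (C2 : Set (Fin n → ZMod 2)) := by
  ext z
  simp only [Set.mem_preimage, SetLike.mem_coe]
  constructor
  · intro hz
    obtain ⟨a, w, hw, heq⟩ := (mem_codeOf C2 g).mp hz
    have hres : (0 : Fin n → ZMod 2) = ∑ i, r42 (a i) • g i := by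
      have := res4_combo g v a w
      rw [← heq, res4_iot4] at this
      exact this
    have hcoef : ∀ i, r42 (a i) = 0 := by
      have := linearIndependent_iff'.mp hind Finset.univ (fun i => r42 (a i)) ?_
      · exact fun i => this i (Finset.mem_univ i)
      · exact hres.symm
    -- now each a i = 2 * cast c i
    have hexists : ∀ i, ∃ c : ZMod 2, a i = 2 * ZMod.cast c := by
      intro i
      have h0 := hcoef i
      revert h0
      exact (by decide : ∀ b : ZMod 4, r42 b = 0 → ∃ c : ZMod 2, b = 2 * ZMod.cast c) (a i)
    choose c hc using hexists
    have hsm : ∀ i, a i • gvec g v i = iot4 (c i • g i) := by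
      intro i
      funext t
      have h := coord_smul2 (c i) (g i t) (v i t)
      rw [hc i]
      exact h
    have : iot4 z = iot4 ((∑ i, c i • g i) + w) := by
      rw [heq]
      have : (∑ i, a i • gvec g v i) = iot4A n (∑ i, c i • g i) := by
        rw [map_sum]
        exact Finset.sum_congr rfl fun i _ => hsm i
      rw [this]
      exact (map_add (iot4A n) _ w).symm
    have hz2 := iot4_injective this
    rw [hz2]
    exact C2.add_mem (Submodule.sum_mem _ fun i _ => C2.smul_mem _ (hgC2 i)) hw
  · intro hz
    exact Submodule.mem_sup_right ⟨z, hz, rfl⟩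

/-- codes equal iff reps congruent mod C2 -/
lemma codeOf_eq_of_congr {v v' : Fin k1 → (Fin n → ZMod 2)}
    (h : ∀ i, v i - v' i ∈ C2) : codeOf C2 g v = codeOf C2 g v' := by
  have key : ∀ (v v' : Fin k1 → (Fin n → ZMod 2)), (∀ i, v i - v' i ∈ C2) →
      codeOf C2 g v ≤ codeOf C2 g v' := by
    intro v v' hvv
    rw [codeOf, sup_le_iff]
    constructor
    · rw [Submodule.span_le]
      rintro _ ⟨i, rfl⟩
      have : gvec g v i = gvec g v' i + iot4 (v i - v' i) := by
        show lift0 (g i) + iot4 (v i) = (lift0 (g i) + iot4 (v' i)) + iot4 (v i - v' i)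
        have : iot4 (v i) = iot4 (v' i) + iot4 (v i - v' i) := by
          have := map_sub (iot4A n) (v i) (v' i)
          rw [iot4A_apply, iot4A_apply, iot4A_apply] at this
          rw [this]; abel
        rw [this]; abel
      rw [this]
      exact (codeOf C2 g v').add_mem
        (Submodule.mem_sup_left (Submodule.subset_span ⟨i, rfl⟩))
        (Submodule.mem_sup_right ⟨v i - v' i, hvv i, rfl⟩)
    · exact le_sup_right
  refine le_antisymm (key v v' h) (key v' v fun i => ?_)
  have := C2.neg_mem (h i)
  simpa using this

lemma congr_of_codeOf_eq (hind : LinearIndependent (ZMod 2) g) (hgC2 : ∀ i, g i ∈ C2)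
    {v v' : Fin k1 → (Fin n → ZMod 2)}
    (h : codeOf C2 g v = codeOf C2 g v') : ∀ i, v i - v' i ∈ C2 := by
  intro i
  have h1 : gvec g v i ∈ codeOf C2 g v' := by
    rw [← h]; exact Submodule.mem_sup_left (Submodule.subset_span ⟨i, rfl⟩)
  have h2 : gvec g v' i ∈ codeOf C2 g v' :=
    Submodule.mem_sup_left (Submodule.subset_span ⟨i, rfl⟩)
  have h3 : iot4 (v i - v' i) ∈ codeOf C2 g v' := by
    have : iot4 (v i - v' i) = gvec g v i - gvec g v' i := by
      have := map_sub (iot4A n) (v i) (v' i)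
      rw [iot4A_apply, iot4A_apply, iot4A_apply] at this
      rw [this]
      show iot4 (v i) - iot4 (v' i) = (lift0 (g i) + iot4 (v i)) - (lift0 (g i) + iot4 (v' i))
      abel
    rw [this]
    exact (codeOf C2 g v').sub_mem h1 h2
  have := torsion_codeOf C2 g hind hgC2 v'
  have hmem : v i - v' i ∈ iot4 ⁻¹' ((codeOf C2 g v' : Submodule (ZMod 4) (Fin n → ZMod 4)) : Set _) := h3
  rw [this] at hmem
  exact hmem

lemma exists_rep_of_code (hind : LinearIndependent (ZMod 2) g)
    {C : Submodule (ZMod 4) (Fin n → ZMod 4)}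
    (himg : res4 '' (C : Set (Fin n → ZMod 4)) = ((Submodule.span (ZMod 2) (Set.range g) : Submodule (ZMod 2) (Fin n → ZMod 2)) : Set (Fin n → ZMod 2)))
    (htor : iot4 ⁻¹' (C : Set (Fin n → ZMod 4)) = (C2 : Set (Fin n → ZMod 2))) :
    ∃ v : Fin k1 → (Fin n → ZMod 2), C = codeOf C2 g v := by
  -- choose lifts of each g i
  have hx : ∀ i : Fin k1, ∃ x, x ∈ C ∧ res4 x = g i := by
    intro i
    have : g i ∈ res4 '' (C : Set (Fin n → ZMod 4)) := by
      rw [himg]; exact Submodule.subset_span ⟨i, rfl⟩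
    obtain ⟨x, hx, hres⟩ := this
    exact ⟨x, hx, hres⟩
  choose x hxC hxres using hx
  set vv : Fin k1 → (Fin n → ZMod 2) := fun i t => hf (x i t - ZMod.cast (g i t)) with hvv
  refine ⟨vv, ?_⟩
  have hgv : ∀ i, gvec g vv i = x i := by
    intro i; funext t
    show ZMod.cast (g i t) + 2 * ZMod.cast (hf (x i t - ZMod.cast (g i t))) = x i t
    have hres : r42 (x i t) = g i t := congrFun (hxres i) t
    revert hres
    exact (by decide : ∀ (u : ZMod 4) (a : ZMod 2), r42 u = a →
      ZMod.cast a + 2 * ZMod.cast (hf (u - ZMod.cast a)) = u) (x i t) (g i t)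
  apply le_antisymm
  · -- C ≤ codeOf
    intro z hz
    have hresz : res4 z ∈ Submodule.span (ZMod 2) (Set.range g) := by
      rw [← SetLike.mem_coe, ← himg]
      exact ⟨z, hz, rfl⟩
    obtain ⟨c, hc⟩ := (mem_span_range_iff_exists_fun (ZMod 2)).mp hresz
    set y : Fin n → ZMod 4 := ∑ i, (ZMod.cast (c i) : ZMod 4) • x i with hy
    have hyC : y ∈ C := Submodule.sum_mem _ fun i _ => C.smul_mem _ (hxC i)
    have hyCode : y ∈ codeOf C2 g vv := by
      refine Submodule.mem_sup_left (Submodule.sum_mem _ fun i _ => Submodule.smul_mem _ _ ?_)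
      have hmem : gvec g vv i ∈ Submodule.span (ZMod 4) (Set.range (gvec g vv)) :=
        Submodule.subset_span ⟨i, rfl⟩
      rwa [hgv i] at hmem
    have hres0 : res4 (z - y) = 0 := by
      have h1 : res4L n y = ∑ i, c i • g i := by
        rw [hy, map_sum]
        refine Finset.sum_congr rfl fun i _ => ?_
        rw [LinearMap.map_smulₛₗ]
        have : r42 (ZMod.cast (c i) : ZMod 4) = c i :=
          (by decide : ∀ a : ZMod 2, r42 (ZMod.cast a : ZMod 4) = a) (c i)
        rw [this]
        show c i • res4 (x i) = c i • g i
        rw [hxres i]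
      have h2 : res4L n (z - y) = res4L n z - res4L n y := map_sub _ _ _
      show res4L n (z - y) = 0
      rw [h2, h1]
      show res4 z - ∑ i, c i • g i = 0
      rw [hc]
      simp
    -- z - y = iot4 (something)
    have hzy : ∃ u : Fin n → ZMod 2, iot4 u = z - y := by
      refine ⟨fun t => hf ((z - y) t), ?_⟩
      funext t
      have h0 : r42 ((z-y) t) = 0 := congrFun hres0 t
      revert h0
      exact (by decide : ∀ u : ZMod 4, r42 u = 0 → 2 * ZMod.cast (hf u) = u) ((z-y) t)
    obtain ⟨u, hu⟩ := hzy
    have huC2 : u ∈ C2 := by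
      have : iot4 u ∈ (C : Set (Fin n → ZMod 4)) := by rw [hu]; exact C.sub_mem hz hyC
      have hmem : u ∈ iot4 ⁻¹' (C : Set (Fin n → ZMod 4)) := this
      rw [htor] at hmem; exact hmem
    have : z = y + iot4 u := by rw [hu]; abel
    rw [this]
    exact (codeOf C2 g vv).add_mem hyCode (Submodule.mem_sup_right ⟨u, huC2, rfl⟩)
  · -- codeOf ≤ C
    rw [codeOf, sup_le_iff]
    constructor
    · rw [Submodule.span_le]
      rintro _ ⟨i, rfl⟩
      rw [hgv i]
      exact hxC i
    · rintro _ ⟨w, hw, rfl⟩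
      have : w ∈ iot4 ⁻¹' (C : Set (Fin n → ZMod 4)) := by rw [htor]; exact hw
      exact this
end Code

section Even
open Submodule
variable {n k1 : ℕ}

lemma codeOf_eq_span (C2 : Submodule (ZMod 2) (Fin n → ZMod 2)) (g v : Fin k1 → (Fin n → ZMod 2)) :
    codeOf C2 g v = Submodule.span (ZMod 4) (Set.range (gvec g v) ∪ iot4 '' C2) := by
  rw [Submodule.span_union, codeOf]
  congr 1
  exact (Submodule.span_eq (iotSub C2)).symm

lemma wte_iot4 (w : Fin n → ZMod 2) : ∑ t, ewt (iot4 w t) = 4 * ∑ t, (w t).val := by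
  rw [Finset.mul_sum]
  refine Finset.sum_congr rfl fun t _ => ?_
  exact (by decide : ∀ a : ZMod 2, ewt ((2:ZMod 4) * ZMod.cast a) = 4 * a.val) (w t)

lemma dvd8_wte_iot4 {w : Fin n → ZMod 2} (hw : ∑ t, w t = 0) : 8 ∣ ∑ t, ewt (iot4 w t) := by
  rw [wte_iot4]
  have h2 : 2 ∣ ∑ t, (w t).val := by
    rw [← ZMod.natCast_eq_zero_iff, Nat.cast_sum]
    rw [← hw]
    refine Finset.sum_congr rfl fun t _ => ?_
    rw [ZMod.natCast_val, ZMod.cast_id]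
  obtain ⟨m, hm⟩ := h2
  exact ⟨m, by omega⟩

lemma dot4_iot_iot (w w' : Fin n → ZMod 2) : ∑ t, iot4 w t * iot4 w' t = 0 := by
  refine Finset.sum_eq_zero fun t _ => ?_
  exact (by decide : ∀ a b : ZMod 2, ((2:ZMod 4) * ZMod.cast a) * ((2:ZMod 4) * ZMod.cast b) = 0) (w t) (w' t)

lemma dot4_res_iot (x : Fin n → ZMod 4) (w : Fin n → ZMod 2) :
    ∑ t, x t * iot4 w t = 2 * ZMod.cast (∑ t, res4 x t * w t) := by
  have h1 : ∀ t, x t * iot4 w t = j24 (res4 x t * w t) := by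
    intro t
    exact (by decide : ∀ (u : ZMod 4) (b : ZMod 2), u * ((2:ZMod 4) * ZMod.cast b) = j24 (r42 u * b)) (x t) (w t)
  calc ∑ t, x t * iot4 w t = ∑ t, j24 (res4 x t * w t) := Finset.sum_congr rfl fun t _ => h1 t
    _ = j24 (∑ t, res4 x t * w t) := (map_sum j24 _ _).symm
    _ = _ := rfl

lemma dot4_self (x : Fin n → ZMod 4) : ∑ t, x t * x t = ((∑ t, ewt (x t) : ℕ) : ZMod 4) := by
  rw [Nat.cast_sum]
  refine Finset.sum_congr rfl fun t _ => ?_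
  exact ((by decide : ∀ a : ZMod 4, ((ewt a : ℕ) : ZMod 4) = a * a) (x t)).symm

lemma dot4_self_zero {x : Fin n → ZMod 4} (hx : 8 ∣ ∑ t, ewt (x t)) : ∑ t, x t * x t = 0 := by
  rw [dot4_self]
  obtain ⟨m, hm⟩ := hx
  rw [hm]
  push_cast
  ring_nf
  rw [show ((8:ZMod 4)) = 0 by decide]
  ring

/-- evenness characterization for codeOf -/
lemma evenCode_codeOf_iff (C2 : Submodule (ZMod 2) (Fin n → ZMod 2)) (g v : Fin k1 → (Fin n → ZMod 2))
    (hwC2 : ∀ w ∈ C2, ∑ t, w t = 0)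
    (hog : ∀ w ∈ C2, ∀ i, ∑ t, g i t * w t = 0) :
    evenCode ((codeOf C2 g v : Submodule (ZMod 4) (Fin n → ZMod 4)) : Set (Fin n → ZMod 4)) ↔
      (∀ i, 8 ∣ ∑ t, ewt (gvec g v i t)) ∧
      (∀ i j, i < j → ∑ t, gvec g v i t * gvec g v j t = 0) := by
  rw [codeOf_eq_span, evenCode_span_iff]
  constructor
  · rintro ⟨h1, h2⟩
    exact ⟨fun i => h1 _ (Set.mem_union_left _ ⟨i, rfl⟩),
      fun i j _ => h2 _ (Set.mem_union_left _ ⟨i, rfl⟩) _ (Set.mem_union_left _ ⟨j, rfl⟩)⟩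
  · rintro ⟨h1, h2⟩
    have horth : ∀ i j, ∑ t, gvec g v i t * gvec g v j t = 0 := by
      intro i j
      rcases lt_trichotomy i j with h | h | h
      · exact h2 i j h
      · rw [h]; exact dot4_self_zero (h1 j)
      · rw [Finset.sum_congr rfl fun t _ => mul_comm (gvec g v i t) (gvec g v j t)]
        exact h2 j i h
    constructor
    · rintro x (⟨i, rfl⟩ | ⟨w, hw, rfl⟩)
      · exact h1 i
      · exact dvd8_wte_iot4 (hwC2 w hw)
    · rintro x (⟨i, rfl⟩ | ⟨w, hw, rfl⟩) y (⟨j, rfl⟩ | ⟨w', hw', rfl⟩)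
      · exact horth i j
      · rw [dot4_res_iot]
        have : res4 (gvec g v i) = g i := res4_gvec g v i
        rw [this, hog w' hw' i]
        decide
      · rw [Finset.sum_congr rfl fun t _ => mul_comm (iot4 w t) (gvec g v j t)]
        rw [dot4_res_iot]
        have : res4 (gvec g v j) = g j := res4_gvec g v j
        rw [this, hog w hw j]
        decide
      · exact dot4_iot_iot w w'
end Even

section Conditions
open Submodule
variable {n : ℕ}

lemma ewt_gv_coord (a b : ZMod 2) :
    ((ewt ((ZMod.cast a : ZMod 4) + (2:ZMod 4) * ZMod.cast b) : ℕ) : ZMod 8)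
      = ((a.val : ℕ) : ZMod 8) + 4 * ((b.val : ℕ) : ZMod 8) + 4 * (((a*b).val : ℕ) : ZMod 8) := by
  revert a b; decide

lemma wte_gv (c v : Fin n → ZMod 2) :
    ((∑ t, ewt ((lift0 c + iot4 v) t) : ℕ) : ZMod 8)
      = ((∑ t, (c t).val : ℕ) : ZMod 8) + 4 * ((∑ t, (v t).val : ℕ) : ZMod 8)
        + 4 * ((∑ t, ((c t) * (v t)).val : ℕ) : ZMod 8) := by
  push_cast
  rw [Finset.mul_sum, Finset.mul_sum, ← Finset.sum_add_distrib, ← Finset.sum_add_distrib]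
  refine Finset.sum_congr rfl fun t _ => ?_
  have := ewt_gv_coord (c t) (v t)
  push_cast at this ⊢
  exact this

lemma four_mul_zmod8_eq_zero_iff (M : ℕ) : ((4 * M : ℕ) : ZMod 8) = 0 ↔ ((M : ℕ) : ZMod 2) = 0 := by
  rw [ZMod.natCast_eq_zero_iff, ZMod.natCast_eq_zero_iff]
  omega

lemma natsum_val_z2 (w : Fin n → ZMod 2) : ((∑ t, (w t).val : ℕ) : ZMod 2) = ∑ t, w t := by
  push_cast
  refine Finset.sum_congr rfl fun t _ => ?_
  rw [ZMod.natCast_val, ZMod.cast_id]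

/-- condition A -/
lemma condA_iff (c v : Fin n → ZMod 2) (hc4 : 4 ∣ ∑ t, (c t).val) :
    (8 ∣ ∑ t, ewt ((lift0 c + iot4 v) t)) ↔
      ∑ t, v t * (1 + c t) = (((∑ t, (c t).val) / 4 : ℕ) : ZMod 2) := by
  obtain ⟨q, hq⟩ := hc4
  have hq' : (∑ t, (c t).val) / 4 = q := by omega
  rw [dvd8_iff, wte_gv, hq]
  rw [show (4*q)/4 = q by omega]
  have e48 : ((4 * q : ℕ) : ZMod 8) = 4 * (q : ZMod 8) := by push_cast; ring
  have key : ((4*q : ℕ) : ZMod 8) + 4 * ((∑ t, (v t).val : ℕ) : ZMod 8) + 4 * ((∑ t, ((c t) * (v t)).val : ℕ) : ZMod 8)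
      = ((4 * (q + (∑ t, (v t).val) + (∑ t, ((c t) * (v t)).val)) : ℕ) : ZMod 8) := by
    push_cast; ring
  rw [key, four_mul_zmod8_eq_zero_iff]
  have expand : ((q + (∑ t, (v t).val) + (∑ t, ((c t) * (v t)).val) : ℕ) : ZMod 2)
      = (q : ZMod 2) + ∑ t, v t + ∑ t, c t * v t := by
    rw [Nat.cast_add, Nat.cast_add, natsum_val_z2 v, natsum_val_z2 (fun t => c t * v t)]
  rw [expand]
  have lhs_eq : ∑ t, v t * (1 + c t) = ∑ t, v t + ∑ t, c t * v t := by
    rw [← Finset.sum_add_distrib]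
    exact Finset.sum_congr rfl fun t _ => by ring
  rw [lhs_eq, add_assoc]
  exact (by decide : ∀ a b : ZMod 2, (a + b = 0) ↔ (b = a)) (q : ZMod 2) _
end Conditions

section CondB
open Submodule
variable {n : ℕ}

lemma gv_mul_coord (a b a' b' : ZMod 2) :
    ((ZMod.cast a : ZMod 4) + (2:ZMod 4) * ZMod.cast b) * ((ZMod.cast a' : ZMod 4) + (2:ZMod 4) * ZMod.cast b')
      = (((a*a').val : ℕ) : ZMod 4) + j24 (a*b' + a'*b) := by
  revert a b a' b'; decide

lemma two_natcast_z4 (p : ℕ) : ((2*p : ℕ) : ZMod 4) = j24 ((p : ℕ) : ZMod 2) := by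
  have h1 : ((2*p : ℕ) : ZMod 4) = 2 * ((p:ℕ) : ZMod 4) := by push_cast; ring
  have h2 : ∀ x : ZMod 4, 2*x = j24 (r42 x) := by decide
  rw [h1, h2]
  congr 1
  exact map_natCast r42 p

lemma condB_iff (c c' v v' : Fin n → ZMod 2) (h2 : 2 ∣ ∑ t, (c t * c' t).val) :
    (∑ t, (lift0 c + iot4 v) t * (lift0 c' + iot4 v') t = 0) ↔
      (∑ t, v t * c' t) + (∑ t, v' t * c t) = (((∑ t, (c t * c' t).val) / 2 : ℕ) : ZMod 2) := by
  obtain ⟨p, hp⟩ := h2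
  have hsum : ∑ t, (lift0 c + iot4 v) t * (lift0 c' + iot4 v') t
      = ((∑ t, (c t * c' t).val : ℕ) : ZMod 4) + j24 (∑ t, (c t * v' t + c' t * v t)) := by
    rw [Nat.cast_sum, map_sum j24, ← Finset.sum_add_distrib]
    refine Finset.sum_congr rfl fun t _ => ?_
    exact gv_mul_coord (c t) (v t) (c' t) (v' t)
  rw [hsum, hp]
  rw [show (2*p)/2 = p by omega]
  rw [two_natcast_z4, ← map_add]
  have hinj : ∀ y : ZMod 2, j24 y = 0 ↔ y = 0 := by decide
  rw [hinj]
  have hX : ∑ t, (c t * v' t + c' t * v t) = (∑ t, v t * c' t) + (∑ t, v' t * c t) := by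
    rw [← Finset.sum_add_distrib]
    exact Finset.sum_congr rfl fun t _ => by ring
  rw [hX]
  exact (by decide : ∀ a b : ZMod 2, (a + b = 0) ↔ (b = a)) ((p:ℕ) : ZMod 2) _
end CondB

section Linear
open Submodule
variable {n k1 : ℕ} (C2 : Submodule (ZMod 2) (Fin n → ZMod 2))

def dotL (c : Fin n → ZMod 2) : (Fin n → ZMod 2) →ₗ[ZMod 2] ZMod 2 where
  toFun v := ∑ t, v t * c t
  map_add' u w := by
    rw [← Finset.sum_add_distrib]
    exact Finset.sum_congr rfl fun t _ => by show (u t + w t) * c t = _; ring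
  map_smul' a u := by
    show ∑ t, (a * u t) * c t = a * ∑ t, u t * c t
    rw [Finset.mul_sum]
    exact Finset.sum_congr rfl fun t _ => by ring

def qdot (c : Fin n → ZMod 2) (hc : ∀ w ∈ C2, ∑ t, w t * c t = 0) :
    ((Fin n → ZMod 2) ⧸ C2) →ₗ[ZMod 2] ZMod 2 :=
  Submodule.liftQ C2 (dotL c) (fun w hw => LinearMap.mem_ker.mpr (hc w hw))

lemma qdot_mk (c : Fin n → ZMod 2) (hc : ∀ w ∈ C2, ∑ t, w t * c t = 0) (v : Fin n → ZMod 2) :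
    qdot C2 c hc (Submodule.Quotient.mk v) = ∑ t, v t * c t := rfl

def Jt (k1 : ℕ) (i0 : Fin k1) : Type :=
  {p : Fin k1 × Fin k1 // p.1 < p.2} ⊕ {i : Fin k1 // i ≠ i0}

instance (k1 : ℕ) (i0 : Fin k1) : Fintype (Jt k1 i0) := by unfold Jt; infer_instance

variable (g : Fin k1 → (Fin n → ZMod 2))

def Lmap (i0 : Fin k1)
    (hA : ∀ i : Fin k1, ∀ w ∈ C2, ∑ t, w t * (g i0 t + g i t) = 0)
    (hB : ∀ i : Fin k1, ∀ w ∈ C2, ∑ t, w t * g i t = 0) :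
    (Fin k1 → (Fin n → ZMod 2) ⧸ C2) →ₗ[ZMod 2] (Jt k1 i0 → ZMod 2) :=
  LinearMap.pi fun j => match j with
    | Sum.inl p => (qdot C2 (g p.1.2) (hB p.1.2)).comp (LinearMap.proj p.1.1)
        + (qdot C2 (g p.1.1) (hB p.1.1)).comp (LinearMap.proj p.1.2)
    | Sum.inr i => (qdot C2 (fun t => g i0 t + g i.1 t) (hA i.1)).comp (LinearMap.proj i.1)

def w0vec (i0 : Fin k1) : Jt k1 i0 → ZMod 2 := fun j => match j with
  | Sum.inl p => (((∑ t, (g p.1.1 t * g p.1.2 t).val) / 2 : ℕ) : ZMod 2)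
  | Sum.inr i => (((∑ t, (g i.1 t).val) / 4 : ℕ) : ZMod 2)

lemma even_iff_Lmap (i0 : Fin k1)
    (hA : ∀ i : Fin k1, ∀ w ∈ C2, ∑ t, w t * (g i0 t + g i t) = 0)
    (hB : ∀ i : Fin k1, ∀ w ∈ C2, ∑ t, w t * g i t = 0)
    (hone : g i0 = fun _ => 1)
    (hde : ∀ i, 4 ∣ ∑ t, (g i t).val)
    (hBev : ∀ i j, 2 ∣ ∑ t, (g i t * g j t).val)
    (hn8' : (((∑ t, (g i0 t).val) / 4 : ℕ) : ZMod 2) = 0)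
    (hwC2 : ∀ w ∈ C2, ∑ t, w t = 0)
    (hog : ∀ w ∈ C2, ∀ i, ∑ t, g i t * w t = 0)
    (s : Fin k1 → (Fin n → ZMod 2) ⧸ C2) (vs : Fin k1 → (Fin n → ZMod 2))
    (hmk : ∀ i, Submodule.Quotient.mk (vs i) = s i) :
    evenCode ((codeOf C2 g vs : Submodule (ZMod 4) (Fin n → ZMod 4)) : Set (Fin n → ZMod 4)) ↔
      Lmap C2 g i0 hA hB s = w0vec g i0 := by
  rw [evenCode_codeOf_iff C2 g vs hwC2 hog]
  have hgvec : ∀ i, gvec g vs i = lift0 (g i) + iot4 (vs i) := fun i => rfl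
  -- component formulas
  have hLinl : ∀ (p : {p : Fin k1 × Fin k1 // p.1 < p.2}),
      Lmap C2 g i0 hA hB s (Sum.inl p)
        = (∑ t, vs p.1.1 t * g p.1.2 t) + ∑ t, vs p.1.2 t * g p.1.1 t := by
    rintro p
    show (qdot C2 (g p.1.2) (hB p.1.2)) (s p.1.1) + (qdot C2 (g p.1.1) (hB p.1.1)) (s p.1.2) = _
    rw [← hmk p.1.1, ← hmk p.1.2, qdot_mk, qdot_mk]
  have hLinr : ∀ (i : {i : Fin k1 // i ≠ i0}),
      Lmap C2 g i0 hA hB s (Sum.inr i)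
        = ∑ t, vs i.1 t * (1 + g i.1 t) := by
    rintro i
    show (qdot C2 (fun t => g i0 t + g i.1 t) (hA i.1)) (s i.1) = _
    rw [← hmk i.1, qdot_mk]
    refine Finset.sum_congr rfl fun t _ => ?_
    rw [hone]
  constructor
  · rintro ⟨h1, h2⟩
    funext j
    match j with
    | Sum.inl p =>
      rw [hLinl p]
      show _ = (((∑ t, (g p.1.1 t * g p.1.2 t).val) / 2 : ℕ) : ZMod 2)
      exact (condB_iff (g p.1.1) (g p.1.2) (vs p.1.1) (vs p.1.2) (hBev p.1.1 p.1.2)).mp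
        (h2 p.1.1 p.1.2 p.2)
    | Sum.inr i =>
      rw [hLinr i]
      show _ = (((∑ t, (g i.1 t).val) / 4 : ℕ) : ZMod 2)
      exact (condA_iff (g i.1) (vs i.1) (hde i.1)).mp (h1 i.1)
  · intro hL
    constructor
    · intro i
      by_cases hi : i = i0
      · subst hi
        rw [hgvec i, condA_iff (g i) (vs i) (hde i), hn8']
        rw [hone]
        refine Finset.sum_eq_zero fun t _ => ?_
        show vs i t * (1 + 1) = 0
        rw [(by decide : (1 : ZMod 2) + 1 = 0), mul_zero]
      · have := congrFun hL (Sum.inr ⟨i, hi⟩)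
        rw [hLinr ⟨i, hi⟩] at this
        rw [hgvec i, condA_iff (g i) (vs i) (hde i)]
        exact this
    · intro i j hij
      have := congrFun hL (Sum.inl ⟨(i, j), hij⟩)
      rw [hLinl ⟨(i, j), hij⟩] at this
      rw [hgvec i, hgvec j, condB_iff (g i) (g j) (vs i) (vs j) (hBev i j)]
      exact this
end Linear

section Counting
variable {F M N : Type} [Field F] [AddCommGroup M] [Module F M] [AddCommGroup N] [Module F N]

lemma card_fiber_mul (f : M →ₗ[F] N) (hf : Function.Surjective f) (t : N) :
    Nat.card {x : M // f x = t} * Nat.card N = Nat.card M := by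
  obtain ⟨x0, hx0⟩ := hf t
  have e : {x : M // f x = t} ≃ LinearMap.ker f :=
    { toFun := fun x => ⟨x.1 - x0, by
        rw [LinearMap.mem_ker, map_sub, x.2, hx0, sub_self]⟩
      invFun := fun y => ⟨y.1 + x0, by
        rw [map_add, LinearMap.mem_ker.mp y.2, hx0, zero_add]⟩
      left_inv := fun x => by ext; simp
      right_inv := fun y => by ext; simp }
  rw [Nat.card_congr e]
  have h1 := Submodule.card_eq_card_quotient_mul_card (LinearMap.ker f)
  have h2 : Nat.card (M ⧸ LinearMap.ker f) = Nat.card N :=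
    Nat.card_congr (f.quotKerEquivOfSurjective hf).toEquiv
  rw [h1, h2]

lemma card_eq_pow_finrank2 {M : Type} [AddCommGroup M] [Module (ZMod 2) M]
    [Module.Finite (ZMod 2) M] :
    Nat.card M = 2 ^ Module.finrank (ZMod 2) M := by
  classical
  let b := Module.finBasis (ZMod 2) M
  rw [Nat.card_congr b.equivFun.toEquiv, Nat.card_pi]
  simp [Nat.card_zmod]

def pairEquiv (k : ℕ) : {p : Fin k × Fin k // p.1 < p.2} ≃ Σ j : Fin k, Fin j.val where
  toFun p := ⟨p.1.2, ⟨p.1.1.val, p.2⟩⟩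
  invFun x := ⟨(⟨x.2.val, lt_trans x.2.isLt x.1.isLt⟩, x.1), x.2.isLt⟩
  left_inv p := by ext <;> rfl
  right_inv x := by ext <;> rfl

lemma card_pairs_mul_two (k : ℕ) : Fintype.card {p : Fin k × Fin k // p.1 < p.2} * 2 = k * (k-1) := by
  rw [Fintype.card_congr (pairEquiv k), Fintype.card_sigma]
  simp only [Fintype.card_fin]
  rw [Fin.sum_univ_eq_sum_range (fun i => i) k]
  exact Finset.sum_range_id_mul_two k

lemma card_Jt (k1 : ℕ) (i0 : Fin k1) :
    2 * Fintype.card (Jt k1 i0) = 2 * (k1 - 1) + k1 * (k1 - 1) := by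
  have : Fintype.card (Jt k1 i0)
      = Fintype.card {p : Fin k1 × Fin k1 // p.1 < p.2} + Fintype.card {i : Fin k1 // i ≠ i0} := by
    unfold Jt
    rw [Fintype.card_sum]
  rw [this]
  have h1 : Fintype.card {i : Fin k1 // i ≠ i0} = k1 - 1 := by
    simp [Fintype.card_subtype_compl]
  have h2 := card_pairs_mul_two k1
  omega
end Counting

section Surj
open Matrix
open Submodule
variable {n k1 : ℕ}

/-- surjectivity of v ↦ (∑ t, v t * g j t)_j for linearly independent g -/
lemma bigF_surjective (g : Fin k1 → (Fin n → ZMod 2)) (hind : LinearIndependent (ZMod 2) g) :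
    Function.Surjective (LinearMap.pi (fun j => dotL (g j)) :
      (Fin n → ZMod 2) →ₗ[ZMod 2] (Fin k1 → ZMod 2)) := by
  classical
  set M : Matrix (Fin k1) (Fin n) (ZMod 2) := Matrix.of (fun j t => g j t) with hM
  have heq : (LinearMap.pi (fun j => dotL (g j)) :
      (Fin n → ZMod 2) →ₗ[ZMod 2] (Fin k1 → ZMod 2)) = M.mulVecLin := by
    apply LinearMap.ext
    intro v
    funext j
    show ∑ t, v t * g j t = ∑ t, M j t * v t
    exact Finset.sum_congr rfl fun t _ => mul_comm _ _
  rw [heq]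
  rw [← LinearMap.range_eq_top]
  have hker : LinearMap.ker (Mᵀ.mulVecLin) = ⊥ := by
    rw [LinearMap.ker_eq_bot]
    intro a b hab
    have hcomb : ∀ (c : Fin k1 → ZMod 2), Mᵀ.mulVecLin c = ∑ j, c j • g j := by
      intro c
      funext t
      show ∑ j, Mᵀ t j * c j = _
      rw [Finset.sum_apply]
      exact Finset.sum_congr rfl fun j _ => by
        show g j t * c j = (c j • g j) t
        simp [mul_comm]
    have h0 : ∑ j, (a - b) j • g j = 0 := by
      rw [← hcomb, map_sub, hab, sub_self]
    have := Fintype.linearIndependent_iff.mp hind (fun j => (a - b) j) h0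
    funext j
    have hj := this j
    simp only [Pi.sub_apply] at hj
    exact sub_eq_zero.mp hj
  have hrankT : Mᵀ.rank = k1 := by
    have h := LinearMap.finrank_range_add_finrank_ker (Mᵀ.mulVecLin)
    rw [hker, finrank_bot, add_zero] at h
    have hdefT : Mᵀ.rank = Module.finrank (ZMod 2) (LinearMap.range Mᵀ.mulVecLin) := rfl
    rw [hdefT, h, Module.finrank_pi]
    simp
  have hrank : M.rank = k1 := by
    rw [← Matrix.rank_transpose]
    exact hrankT
  apply Submodule.eq_top_of_finrank_eq
  have hdefM : M.rank = Module.finrank (ZMod 2) (LinearMap.range M.mulVecLin) := rfl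
  rw [← hdefM, hrank, Module.finrank_pi]
  simp

/-- surjectivity of Lmap -/
lemma Lmap_surjective (C2 : Submodule (ZMod 2) (Fin n → ZMod 2))
    (g : Fin k1 → (Fin n → ZMod 2)) (hind : LinearIndependent (ZMod 2) g) (i0 : Fin k1)
    (hA : ∀ i : Fin k1, ∀ w ∈ C2, ∑ t, w t * (g i0 t + g i t) = 0)
    (hB : ∀ i : Fin k1, ∀ w ∈ C2, ∑ t, w t * g i t = 0) :
    Function.Surjective (Lmap C2 g i0 hA hB) := by
  classical
  intro tt
  -- triangular data
  let dOff : Fin k1 → Fin k1 → ZMod 2 := fun i j =>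
    if h : i < j then tt (Sum.inl ⟨(i,j), h⟩) else 0
  let dval : Fin k1 → Fin k1 → ZMod 2 := fun i j =>
    if h : i = j then (if h3 : i = i0 then 0 else tt (Sum.inr ⟨i, h3⟩) - dOff i i0)
    else dOff i j
  have hex : ∀ i : Fin k1, ∃ v : Fin n → ZMod 2, ∀ j, ∑ t, v t * g j t = dval i j := by
    intro i
    obtain ⟨v, hv⟩ := bigF_surjective g hind (dval i)
    exact ⟨v, fun j => congrFun hv j⟩
  choose vv hvv using hex
  refine ⟨fun i => Submodule.Quotient.mk (vv i), ?_⟩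
  funext j
  match j with
  | Sum.inl p =>
    obtain ⟨⟨i, jj⟩, hij⟩ := p
    show (qdot C2 (g jj) (hB jj)) (Submodule.Quotient.mk (vv i))
        + (qdot C2 (g i) (hB i)) (Submodule.Quotient.mk (vv jj)) = _
    rw [qdot_mk, qdot_mk, hvv i jj, hvv jj i]
    have h1 : dval i jj = tt (Sum.inl ⟨(i,jj), hij⟩) := by
      show (if h : i = jj then _ else dOff i jj) = _
      rw [dif_neg (ne_of_lt hij)]
      show (if h : i < jj then tt (Sum.inl ⟨(i,jj), h⟩) else 0) = _
      rw [dif_pos hij]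
    have h2 : dval jj i = 0 := by
      show (if h : jj = i then _ else dOff jj i) = _
      rw [dif_neg (Ne.symm (ne_of_lt hij))]
      show (if h : jj < i then tt (Sum.inl ⟨(jj,i), h⟩) else 0) = _
      rw [dif_neg (not_lt_of_gt hij)]
    rw [h1, h2, add_zero]
  | Sum.inr ii =>
    obtain ⟨i, hi⟩ := ii
    show (qdot C2 (fun t => g i0 t + g i t) (hA i)) (Submodule.Quotient.mk (vv i)) = _
    rw [qdot_mk]
    have hsplit : ∑ t, vv i t * (g i0 t + g i t)
        = (∑ t, vv i t * g i0 t) + ∑ t, vv i t * g i t := by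
      rw [← Finset.sum_add_distrib]
      exact Finset.sum_congr rfl fun t _ => by ring
    rw [hsplit, hvv i i0, hvv i i]
    have h1 : dval i i0 = dOff i i0 := by
      show (if h : i = i0 then _ else dOff i i0) = dOff i i0
      rw [dif_neg hi]
    have h2 : dval i i = tt (Sum.inr ⟨i, hi⟩) - dOff i i0 := by
      show (if h : i = i then (if h3 : i = i0 then 0 else tt (Sum.inr ⟨i, h3⟩) - dOff i i0) else dOff i i)
        = tt (Sum.inr ⟨i, hi⟩) - dOff i i0
      rw [dif_pos rfl, dif_neg hi]
    rw [h1, h2]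
    show dOff i i0 + (tt (Sum.inr ⟨i, hi⟩) - dOff i i0) = _
    ring
end Surj

section Dim
open Submodule
variable {n k1 : ℕ}

/-- k1 ≤ finrank of quotient -/
lemma k1_le_quot (C2 : Submodule (ZMod 2) (Fin n → ZMod 2))
    (g : Fin k1 → (Fin n → ZMod 2)) (hind : LinearIndependent (ZMod 2) g)
    (hB : ∀ i : Fin k1, ∀ w ∈ C2, ∑ t, w t * g i t = 0) :
    k1 ≤ Module.finrank (ZMod 2) ((Fin n → ZMod 2) ⧸ C2) := by
  classical
  let φ : (Fin k1 → ZMod 2) →ₗ[ZMod 2]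
      (((Fin n → ZMod 2) ⧸ C2) →ₗ[ZMod 2] ZMod 2) :=
    { toFun := fun a => ∑ j, a j • qdot C2 (g j) (hB j)
      map_add' := fun a b => by
        rw [← Finset.sum_add_distrib]
        exact Finset.sum_congr rfl fun j _ => by
          rw [← add_smul]; rfl
      map_smul' := fun c a => by
        show ∑ j, (c * a j) • _ = c • ∑ j, a j • _
        rw [Finset.smul_sum]
        exact Finset.sum_congr rfl fun j _ => (mul_smul c (a j) _) }
  have hinj : Function.Injective φ := by
    rw [← LinearMap.ker_eq_bot]
    rw [Submodule.eq_bot_iff]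
    intro a ha
    rw [LinearMap.mem_ker] at ha
    have heval : ∀ v : Fin n → ZMod 2, ∑ j, a j * (∑ t, v t * g j t) = 0 := by
      intro v
      have := congrArg (fun (ψ : ((Fin n → ZMod 2) ⧸ C2) →ₗ[ZMod 2] ZMod 2) =>
        ψ (Submodule.Quotient.mk v)) ha
      simp only [LinearMap.zero_apply] at this
      rw [show φ a = ∑ j, a j • qdot C2 (g j) (hB j) from rfl] at this
      rw [LinearMap.sum_apply] at this
      rw [← this]
      exact Finset.sum_congr rfl fun j _ => by
        rw [LinearMap.smul_apply, qdot_mk]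
        rfl
    -- deduce ∑ j, a j • g j = 0
    have hu : ∀ t0, (∑ j, a j • g j) t0 = 0 := by
      intro t0
      have := heval (Pi.single t0 1)
      have hswap : ∑ j, a j * (∑ t, (Pi.single t0 1 : Fin n → ZMod 2) t * g j t)
          = (∑ j, a j • g j) t0 := by
        rw [Finset.sum_apply]
        refine Finset.sum_congr rfl fun j _ => ?_
        have hs : ∑ t, (Pi.single t0 1 : Fin n → ZMod 2) t * g j t = g j t0 := by
          rw [Finset.sum_eq_single t0]
          · simp
          · intro b _ hb
            simp [Pi.single_apply, hb]
          · intro hb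
            exact absurd (Finset.mem_univ t0) hb
        rw [hs]
        rfl
      rw [hswap] at this
      exact this
    have h0 : ∑ j, a j • g j = 0 := funext fun t0 => hu t0
    exact funext (Fintype.linearIndependent_iff.mp hind a h0)
  have hle := LinearMap.finrank_le_finrank_of_injective hinj
  rw [Module.finrank_pi] at hle
  simp only [Fintype.card_fin] at hle
  rwa [Subspace.dual_finrank_eq] at hle
end Dim

section Arith

lemma exponent_arith (nn k1 k2 d cJ : ℕ) (hd : d = nn - k1 - k2) (hkn : k1 + k2 ≤ nn)
    (h1 : 1 ≤ k1) (hkd : k1 ≤ d) (hcJ : 2*cJ = 2*(k1-1) + k1*(k1-1)) :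
    d*k1 - cJ = (nn - k1 - k2) + (k1-1)*(2*nn - 3*k1 - 2 - 2*k2)/2 := by
  rcases Nat.eq_or_lt_of_le h1 with h1' | h1'
  · -- k1 = 1
    have hk : k1 = 1 := h1'.symm
    subst hk
    omega
  · -- k1 ≥ 2
    set a := k1 - 1 with ha
    have hk : k1 = a + 1 := by omega
    have haa : 1 ≤ a := by omega
    have e2 : 2*nn - 3*k1 - 2 - 2*k2 = 2*d - k1 - 2 := by omega
    rw [e2]
    have hcl : k1 + 2 ≤ 2*d := by omega
    have h2cJ : 2*cJ = a*(a+3) := by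
      have c : k1*a = a*a + a := by rw [hk]; ring
      have e' : a*(a+3) = a*a + 3*a := by ring
      omega
    have hma : a*(a+3) ≤ a*(2*d) := Nat.mul_le_mul_left a (by omega)
    have e3 : a*(2*d) = 2*(a*d) := by ring
    have hcJad : cJ ≤ a*d := by omega
    obtain ⟨e, he1, he2⟩ : ∃ e, 2*d - k1 - 2 = e ∧ 2*d = k1+2+e := ⟨2*d - k1 - 2, rfl, by omega⟩
    have E : 2*(a*d) = 2*cJ + a*e := by
      have c1 : 2*(a*d) = a*(2*d) := by ring
      have c2 : a*(2*d) = a*(k1+2) + a*e := by rw [he2]; ring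
      have c3 : a*(k1+2) = a*(a+3) := by rw [hk]
      omega
    have key : a*(2*d - k1 - 2) = 2*(a*d - cJ) := by
      rw [he1]
      omega
    rw [key, Nat.mul_div_cancel_left _ (by norm_num : 0 < 2)]
    have e5 : d * k1 = a*d + d := by rw [hk]; ring
    omega
end Arith


section Final
open Submodule

lemma sum_val_eq_card {n : ℕ} (x : Fin n → ZMod 2) :
    ∑ t, (x t).val = (Finset.univ.filter fun t => x t ≠ 0).card := by
  rw [Finset.card_filter]
  refine Finset.sum_congr rfl fun t _ => ?_
  exact (by decide : ∀ a : ZMod 2, a.val = if a ≠ 0 then 1 else 0) (x t)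


end Final

/-- with `C₁ ⊆ C₂ ⊆ C₁^⊥`, `C₁` doubly even containing `𝟏`, `dim C₁ = k₁`,
`dim C₂ = k₁ + k₂`, the number of quaternary even codes `C` containing an element of `{±1}^n`
with `π(C) = C₁` and `ι⁻¹(C) = C₂` is `2^{(n−k₁−k₂)+(k₁−1)(2n−3k₁−2−2k₂)/2}`. -/
theorem stmt15 (n k1 k2 : ℕ) (hn8 : 8 ∣ n) (hn : 0 < n)
    (C1 C2 : Submodule (ZMod 2) (Fin n → ZMod 2))
    (h12 : C1 ≤ C2)
    (h2d : (C2 : Set (Fin n → ZMod 2)) ⊆ dualSet (C1 : Set (Fin n → ZMod 2)))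
    (hde : doublyEven (C1 : Set (Fin n → ZMod 2)))
    (hone1 : (fun _ => (1 : ZMod 2)) ∈ C1)
    (hdim1 : Module.finrank (ZMod 2) C1 = k1)
    (hdim2 : Module.finrank (ZMod 2) C2 = k1 + k2) :
    {C : Submodule (ZMod 4) (Fin n → ZMod 4) |
        evenCode (C : Set (Fin n → ZMod 4)) ∧
        (∃ z ∈ C, ∀ i, z i = 1 ∨ z i = -1) ∧
        res4 '' (C : Set (Fin n → ZMod 4)) = (C1 : Set (Fin n → ZMod 2)) ∧
        iot4 ⁻¹' (C : Set (Fin n → ZMod 4)) = (C2 : Set (Fin n → ZMod 2))}.ncard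
      = 2 ^ ((n - k1 - k2) + (k1 - 1) * (2 * n - 3 * k1 - 2 - 2 * k2) / 2) := by
  classical
  -- Step 1: simplify the set (drop the ±1 condition)
  have hset : {C : Submodule (ZMod 4) (Fin n → ZMod 4) |
        evenCode (C : Set (Fin n → ZMod 4)) ∧
        (∃ z ∈ C, ∀ i, z i = 1 ∨ z i = -1) ∧
        res4 '' (C : Set (Fin n → ZMod 4)) = (C1 : Set (Fin n → ZMod 2)) ∧
        iot4 ⁻¹' (C : Set (Fin n → ZMod 4)) = (C2 : Set (Fin n → ZMod 2))}
      = {C : Submodule (ZMod 4) (Fin n → ZMod 4) |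
        evenCode (C : Set (Fin n → ZMod 4)) ∧
        res4 '' (C : Set (Fin n → ZMod 4)) = (C1 : Set (Fin n → ZMod 2)) ∧
        iot4 ⁻¹' (C : Set (Fin n → ZMod 4)) = (C2 : Set (Fin n → ZMod 2))} := by
    ext C
    simp only [Set.mem_setOf_eq]
    constructor
    · rintro ⟨h1, _, h3, h4⟩; exact ⟨h1, h3, h4⟩
    · rintro ⟨h1, h3, h4⟩
      refine ⟨h1, ?_, h3, h4⟩
      have : (fun _ => (1 : ZMod 2)) ∈ res4 '' (C : Set (Fin n → ZMod 4)) := by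
        rw [h3]; exact hone1
      obtain ⟨z, hz, hzres⟩ := this
      refine ⟨z, hz, fun i => ?_⟩
      have : r42 (z i) = 1 := congrFun hzres i
      revert this
      exact (by decide : ∀ u : ZMod 4, r42 u = 1 → u = 1 ∨ u = -1) (z i)
  rw [hset]
  -- Step 2: basis of C1 with distinguished vector 1
  have he1 : (⟨(fun _ => (1:ZMod 2)), hone1⟩ : ↥C1) ≠ 0 := by
    intro h
    have := congrFun (congrArg Subtype.val h) ⟨0, hn⟩
    simp at this
  set e1 : ↥C1 := ⟨(fun _ => (1:ZMod 2)), hone1⟩ with he1def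
  have hli : LinearIndepOn (ZMod 2) id ({e1} : Set ↥C1) :=
    (linearIndepOn_singleton_iff (ZMod 2)).mpr he1
  have : FiniteDimensional (ZMod 2) ↥C1 := by infer_instance
  let B0 := Module.Basis.extend hli
  have : Fintype ↑(hli.extend (Set.subset_univ {e1})) := FiniteDimensional.fintypeBasisIndex B0
  have hcard : Fintype.card ↑(hli.extend (Set.subset_univ {e1})) = k1 := by
    rw [← hdim1, Module.finrank_eq_card_basis B0]
  let eqv : ↑(hli.extend (Set.subset_univ {e1})) ≃ Fin k1 := Fintype.equivFinOfCardEq hcard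
  have he1mem : e1 ∈ hli.extend (Set.subset_univ {e1}) := by
    apply hli.subset_extend
    exact Set.mem_singleton e1
  set iOne : Fin k1 := eqv ⟨e1, he1mem⟩ with hiOne
  let b : Module.Basis (Fin k1) (ZMod 2) ↥C1 := B0.reindex eqv
  have hbOne : b iOne = e1 := by
    rw [hiOne]
    show (B0.reindex eqv) (eqv ⟨e1, he1mem⟩) = e1
    rw [Module.Basis.reindex_apply, Equiv.symm_apply_apply]
    exact Module.Basis.extend_apply_self hli ⟨e1, he1mem⟩
  set g : Fin k1 → (Fin n → ZMod 2) := fun i => ((b i : ↥C1) : Fin n → ZMod 2) with hg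
  have hgC1 : ∀ i, g i ∈ C1 := fun i => (b i).2
  have hone : g iOne = fun _ => (1:ZMod 2) := by
    rw [hg]
    show ((b iOne : ↥C1) : Fin n → ZMod 2) = _
    rw [hbOne]
  have hind : LinearIndependent (ZMod 2) g := by
    have := b.linearIndependent
    exact this.map' C1.subtype (Submodule.ker_subtype C1)
  have hspan : Submodule.span (ZMod 2) (Set.range g) = C1 := by
    have h1 : Set.range g = C1.subtype '' Set.range ⇑b := by
      rw [← Set.range_comp]
      rfl
    rw [h1, Submodule.span_image, Module.Basis.span_eq, Submodule.map_subtype_top]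
  have hgC2 : ∀ i, g i ∈ C2 := fun i => h12 (hgC1 i)
  -- Step 3: orthogonality facts
  have hBperp : ∀ i : Fin k1, ∀ w ∈ C2, ∑ t, w t * g i t = 0 := by
    intro i w hw
    exact h2d hw (g i) (hgC1 i)
  have hwC2 : ∀ w ∈ C2, ∑ t, w t = 0 := by
    intro w hw
    have := h2d hw (fun _ => (1:ZMod 2)) hone1
    simpa using this
  have hA : ∀ i : Fin k1, ∀ w ∈ C2, ∑ t, w t * (g iOne t + g i t) = 0 := by
    intro i w hw
    have : ∑ t, w t * (g iOne t + g i t) = (∑ t, w t * g iOne t) + ∑ t, w t * g i t := by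
      rw [← Finset.sum_add_distrib]
      exact Finset.sum_congr rfl fun t _ => by ring
    rw [this, hBperp iOne w hw, hBperp i w hw, add_zero]
  have hog : ∀ w ∈ C2, ∀ i, ∑ t, g i t * w t = 0 := by
    intro w hw i
    rw [Finset.sum_congr rfl fun t _ => mul_comm (g i t) (w t)]
    exact hBperp i w hw
  have hde' : ∀ i, 4 ∣ ∑ t, (g i t).val := by
    intro i
    rw [sum_val_eq_card]
    exact hde (g i) (hgC1 i)
  have hBev : ∀ i j, 2 ∣ ∑ t, (g i t * g j t).val := by
    intro i j
    rw [← ZMod.natCast_eq_zero_iff, natsum_val_z2]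
    exact h2d (hgC2 i) (g j) (hgC1 j)
  have hn8' : (((∑ t, (g iOne t).val) / 4 : ℕ) : ZMod 2) = 0 := by
    have hsum : ∑ t, (g iOne t).val = n := by
      rw [hone]
      simp [ZMod.val_one]
    rw [hsum]
    obtain ⟨m, hm⟩ := hn8
    rw [hm, show (8*m)/4 = 2*m by omega]
    push_cast
    rw [show ((2:ZMod 2)) = 0 by decide]
    ring
  -- Step 4: the parametrization
  set Q := (Fin n → ZMod 2) ⧸ C2 with hQ
  set L := Lmap C2 g iOne hA hBperp with hL
  set w0 := w0vec g iOne with hw0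
  set sol : Set (Fin k1 → Q) := {s | L s = w0} with hsol
  set Phi : (Fin k1 → Q) → Submodule (ZMod 4) (Fin n → ZMod 4) :=
    fun s => codeOf C2 g (fun i => (s i).out) with hPhi
  have hout : ∀ (s : Fin k1 → Q) (i : Fin k1),
      Submodule.Quotient.mk ((s i).out) = s i := fun s i => Quotient.out_eq _
  -- image equality
  have himg : {C : Submodule (ZMod 4) (Fin n → ZMod 4) |
        evenCode (C : Set (Fin n → ZMod 4)) ∧
        res4 '' (C : Set (Fin n → ZMod 4)) = (C1 : Set (Fin n → ZMod 2)) ∧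
        iot4 ⁻¹' (C : Set (Fin n → ZMod 4)) = (C2 : Set (Fin n → ZMod 2))}
      = Phi '' sol := by
    ext C
    simp only [Set.mem_setOf_eq, Set.mem_image]
    constructor
    · rintro ⟨hev, hres, htor⟩
      have hres' : res4 '' (C : Set (Fin n → ZMod 4))
          = ((Submodule.span (ZMod 2) (Set.range g) : Submodule (ZMod 2) (Fin n → ZMod 2)) :
              Set (Fin n → ZMod 2)) := by
        rw [hres, hspan]
      obtain ⟨v, hv⟩ := exists_rep_of_code C2 g hind hres' htor
      set s : Fin k1 → Q := fun i => Submodule.Quotient.mk (v i) with hs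
      have hPhis : Phi s = C := by
        rw [hPhi, hv]
        apply codeOf_eq_of_congr
        intro i
        rw [← Submodule.Quotient.eq]
        exact hout s i
      refine ⟨s, ?_, hPhis⟩
      show L s = w0
      rw [hL, hw0]
      rw [← even_iff_Lmap C2 g iOne hA hBperp hone hde' hBev hn8' hwC2 hog s
        (fun i => (s i).out) (hout s)]
      show evenCode ((Phi s : Submodule (ZMod 4) (Fin n → ZMod 4)) : Set (Fin n → ZMod 4))
      rw [hPhis]
      exact hev
    · rintro ⟨s, hsol', rfl⟩
      have hev : evenCode ((Phi s : Submodule (ZMod 4) (Fin n → ZMod 4)) : Set (Fin n → ZMod 4)) := by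
        rw [even_iff_Lmap C2 g iOne hA hBperp hone hde' hBev hn8' hwC2 hog s
          (fun i => (s i).out) (hout s)]
        exact hsol'
      refine ⟨hev, ?_, ?_⟩
      · have := map_res4L_codeOf C2 g (fun i => (s i).out)
        rw [hspan] at this
        rw [← this]
        rfl
      · exact torsion_codeOf C2 g hind hgC2 (fun i => (s i).out)
  rw [himg]
  -- injectivity
  have hinj : Set.InjOn Phi sol := by
    intro s _ s' _ hss
    funext i
    rw [← hout s i, ← hout s' i, Submodule.Quotient.eq]
    exact congr_of_codeOf_eq C2 g hind hgC2 hss i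
  rw [Set.ncard_image_of_injOn hinj]
  -- counting
  rw [← Nat.card_coe_set_eq]
  have hcardsol : Nat.card ↥sol = Nat.card {x : Fin k1 → Q // L x = w0} :=
    Nat.card_congr (Equiv.subtypeEquivRight (fun x => Iff.rfl))
  rw [hcardsol]
  have hsurj : Function.Surjective L := Lmap_surjective C2 g hind iOne hA hBperp
  have hfib := card_fiber_mul L hsurj w0
  -- dimension facts
  have hfinV : Module.finrank (ZMod 2) (Fin n → ZMod 2) = n := by
    rw [Module.finrank_pi]
    simp
  set d := Module.finrank (ZMod 2) Q with hd
  have hdQ : d + (k1 + k2) = n := by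
    have := Submodule.finrank_quotient_add_finrank C2
    rw [hdim2, hfinV] at this
    exact this
  have hkn : k1 + k2 ≤ n := by omega
  have hk1pos : 1 ≤ k1 := by
    rw [← hdim1]
    have : Nontrivial ↥C1 := ⟨e1, 0, he1⟩
    have := Module.finrank_pos_iff (R := ZMod 2) (M := ↥C1)
    omega
  have hk1d : k1 ≤ d := k1_le_quot C2 g hind hBperp
  -- cardinalities
  have hcQ : Nat.card Q = 2 ^ d := card_eq_pow_finrank2
  have hcdom : Nat.card (Fin k1 → Q) = 2 ^ (d * k1) := by
    rw [Nat.card_pi, Finset.prod_const, hcQ, Finset.card_univ, Fintype.card_fin, ← pow_mul]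
  set cJ := Fintype.card (Jt k1 iOne) with hcJdef
  have hccod : Nat.card (Jt k1 iOne → ZMod 2) = 2 ^ cJ := by
    rw [Nat.card_pi, Finset.prod_const, Nat.card_zmod, Finset.card_univ]
  have hcJ : 2 * cJ = 2 * (k1 - 1) + k1 * (k1 - 1) := card_Jt k1 iOne
  rw [hcdom, hccod] at hfib
  -- solve for the fiber cardinality
  have hcJle : cJ ≤ d * k1 := by
    have : (2:ℕ) ^ cJ ∣ 2 ^ (d * k1) := ⟨Nat.card {x : Fin k1 → Q // L x = w0}, by rw [← hfib]; ring⟩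
    exact (Nat.pow_dvd_pow_iff_le_right (by norm_num)).mp this
  have hX : Nat.card {x : Fin k1 → Q // L x = w0} = 2 ^ (d * k1 - cJ) := by
    have h2 : (2:ℕ) ^ (d * k1) = 2 ^ (d * k1 - cJ) * 2 ^ cJ := by
      rw [← pow_add]
      congr 1
      omega
    rw [h2] at hfib
    exact Nat.eq_of_mul_eq_mul_right (by positivity) hfib
  rw [hX]
  congr 1
  exact exponent_arith n k1 k2 d cJ (by omega) hkn hk1pos hk1d hcJ

end Paper
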